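/- arXiv:1601.01067 — 2 statements merged into one kernel-verified Lean document; each statement's English description precedes it below -/
import Mathlib

section
/- Let F ∈ ℤ[x]^{n×m} be a matrix with polynomial entries and d = deg(F) the maximum degree of its entries. Then the ℚ[x]-module Sol_{ℚ[x]}(F) = {Y ∈ ℚ[x]^m : FY = 0} is generated by finitely many vectors lying in ℤ[x]^m, each of whose entries has degree at most n·d. -/
open Polynomial

open Matrix Finset in
lemma detDeg {R : Type*} [CommRing R] {k : ℕ} (M : Matrix (Fin k) (Fin k) R[X])
    (D : Fin k → ℕ) (h : ∀ i j, (M i j).natDegree ≤ D i) :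
    M.det.natDegree ≤ ∑ i, D i := by
  rw [Matrix.det_apply']
  apply natDegree_sum_le_of_forall_le
  intro τ _
  refine (natDegree_mul_le).trans ?_
  have h1 : (natDegree (Equiv.Perm.sign τ : R[X])) = 0 := natDegree_intCast _
  rw [h1, zero_add]
  refine (natDegree_prod_le _ _).trans ?_
  calc ∑ i, (M (τ i) i).natDegree ≤ ∑ i, D (τ i) := Finset.sum_le_sum fun i _ => h _ _
    _ = ∑ i, D i := Equiv.sum_comp τ D

lemma adjDeg {R : Type*} [CommRing R] {k : ℕ} (B : Matrix (Fin k) (Fin k) R[X]) (d : ℕ)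
    (h : ∀ i j, (B i j).natDegree ≤ d) (i j : Fin k) :
    ((Matrix.adjugate B) i j).natDegree ≤ (k - 1) * d := by
  rw [Matrix.adjugate_apply]
  refine (detDeg _ (fun t => if t = j then 0 else d) ?_).trans ?_
  · intro a b
    rw [Matrix.updateRow_apply]
    split_ifs with ha
    · rcases Pi.single_apply i (1 : R[X]) b ▸ (rfl : Pi.single i 1 b = Pi.single i 1 b) with _
      rw [Pi.single_apply]
      split_ifs <;> simp
    · exact h a b
  · rw [← Finset.add_sum_erase Finset.univ _ (Finset.mem_univ j), if_pos rfl, zero_add]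
    have h2 : ∀ t ∈ Finset.univ.erase j, (if t = j then 0 else d) = d := by
      intro t ht
      rw [if_neg (Finset.ne_of_mem_erase ht)]
    rw [Finset.sum_congr rfl h2, Finset.sum_const, Finset.card_erase_of_mem (Finset.mem_univ j)]
    simp [Nat.smul_one_eq_cast]

open Matrix Finset in
lemma sel {K : Type*} [Field K] :
    ∀ (n : ℕ) {m : ℕ} (M : Matrix (Fin n) (Fin m) K),
    ∃ (r : ℕ) (ρ : Fin r → Fin n) (σ : Fin r → Fin m), r ≤ n ∧ Function.Injective σ ∧
      (M.submatrix ρ σ).det ≠ 0 ∧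
      ∀ i : Fin n, M i ∈ Submodule.span K (Set.range fun t => M (ρ t)) := by
  intro n
  induction n with
  | zero =>
    intro m M
    exact ⟨0, Fin.elim0, Fin.elim0, le_refl 0, fun a => a.elim0, by simp [Matrix.det_fin_zero],
      fun i => i.elim0⟩
  | succ n IH =>
    intro m M
    obtain ⟨r, ρ, σ, hrn, hσ, hdet, hspan⟩ := IH (M.submatrix Fin.castSucc id)
    by_cases h : M (Fin.last n) ∈ Submodule.span K (Set.range fun t => M (Fin.castSucc (ρ t)))
    · refine ⟨r, Fin.castSucc ∘ ρ, σ, hrn.trans (Nat.le_succ n), hσ, ?_, ?_⟩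
      · convert hdet using 2
        rfl
      · intro i
        induction i using Fin.lastCases with
        | last => exact h
        | cast i => exact hspan i
    · -- extend by the last row and a suitable column
      set ρ' : Fin (r + 1) → Fin (n + 1) := Fin.snoc (Fin.castSucc ∘ ρ) (Fin.last n) with hρ'
      -- cofactors along the new column
      set c : Fin (r + 1) → K := fun i =>
        (-1) ^ ((i : ℕ) + (Fin.last r : ℕ)) *
          (M.submatrix (fun t => ρ' (i.succAbove t)) σ).det with hc
      have hclast : c (Fin.last r) = (M.submatrix (Fin.castSucc ∘ ρ) σ).det := by
        have : ∀ t, ρ' ((Fin.last r).succAbove t) = Fin.castSucc (ρ t) := by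
          intro t; rw [Fin.succAbove_last]; simp [hρ', Fin.snoc_castSucc]
        simp only [hc, this]
        show _ * (M.submatrix (fun t => (ρ t).castSucc) σ).det = _
        have hMs : (M.submatrix (fun t => (ρ t).castSucc) σ) = (M.submatrix (Fin.castSucc ∘ ρ) σ) := rfl
        rw [hMs]
        rw [show ((Fin.last r : ℕ) + (Fin.last r : ℕ)) = 2 * r by simp [Fin.last]; ring]
        simp [pow_mul]
      have hdet' : (M.submatrix (Fin.castSucc ∘ ρ) σ).det ≠ 0 := by
        convert hdet using 2
        rfl
      -- determinant of the extended minor, expanded along the last column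
      have hexp : ∀ j : Fin m,
          (M.submatrix ρ' (Fin.snoc σ j)).det = ∑ i : Fin (r+1), c i * M (ρ' i) j := by
        intro j
        rw [Matrix.det_succ_column (M.submatrix ρ' (Fin.snoc σ j)) (Fin.last r)]
        refine Finset.sum_congr rfl fun i _ => ?_
        have h1 : (M.submatrix ρ' (Fin.snoc σ j)).submatrix i.succAbove (Fin.last r).succAbove
            = M.submatrix (fun t => ρ' (i.succAbove t)) σ := by
          rw [Fin.succAbove_last]
          ext a b
          simp [Fin.snoc_castSucc]
        rw [h1]
        simp only [Matrix.submatrix_apply, Fin.snoc_last, hc]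
        ring
      -- there is a column j making the extended det nonzero
      have hex : ∃ j : Fin m, (M.submatrix ρ' (Fin.snoc σ j)).det ≠ 0 := by
        by_contra hall
        push_neg at hall
        apply h
        have hzero : ∀ j, ∑ i : Fin (r+1), c i * M (ρ' i) j = 0 := by
          intro j; rw [← hexp j]; exact hall j
        have hsplit : ∀ j, c (Fin.last r) * M (Fin.last n) j
            = - ∑ i : Fin r, c (Fin.castSucc i) * M (Fin.castSucc (ρ i)) j := by
          intro j
          have := hzero j
          rw [Fin.sum_univ_castSucc] at this
          have h2 : ρ' (Fin.last r) = Fin.last n := by simp [hρ', Fin.snoc_last]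
          have h3 : ∀ i : Fin r, ρ' (Fin.castSucc i) = Fin.castSucc (ρ i) := by
            intro i; simp [hρ', Fin.snoc_castSucc]
          rw [h2] at this
          simp only [h3] at this
          linear_combination this
        have : M (Fin.last n) = (c (Fin.last r))⁻¹ •
            (- ∑ i : Fin r, c (Fin.castSucc i) • M (Fin.castSucc (ρ i))) := by
          funext j
          simp only [Pi.smul_apply, Pi.neg_apply, Finset.sum_apply, smul_eq_mul, Pi.smul_apply]
          rw [← hsplit j]
          rw [hclast]
          field_simp
        rw [this]
        refine Submodule.smul_mem _ _ (Submodule.neg_mem _ (Submodule.sum_mem _ fun i _ => ?_))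
        exact Submodule.smul_mem _ _ (Submodule.subset_span ⟨i, rfl⟩)
      obtain ⟨j, hj⟩ := hex
      have hjσ : ∀ t, σ t ≠ j := by
        intro t ht
        apply hj
        refine Matrix.det_zero_of_column_eq (i_ne_j := (Fin.castSucc_lt_last t).ne) ?_
        intro k
        simp [Fin.snoc_castSucc, Fin.snoc_last, ht]
      refine ⟨r + 1, ρ', Fin.snoc σ j, Nat.succ_le_succ hrn, ?_, hj, ?_⟩
      · intro a b hab
        induction a using Fin.lastCases with
        | last =>
          induction b using Fin.lastCases with
          | last => rfl
          | cast b => rw [Fin.snoc_last, Fin.snoc_castSucc] at hab; exact absurd hab.symm (hjσ b)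
        | cast a =>
          induction b using Fin.lastCases with
          | last => rw [Fin.snoc_last, Fin.snoc_castSucc] at hab; exact absurd hab (hjσ a)
          | cast b => rw [Fin.snoc_castSucc, Fin.snoc_castSucc] at hab; rw [hσ hab]
      · intro i
        have hsub : Submodule.span K (Set.range fun t => M (Fin.castSucc (ρ t)))
            ≤ Submodule.span K (Set.range fun t => M (ρ' t)) := by
          apply Submodule.span_mono
          rintro _ ⟨t, rfl⟩
          exact ⟨Fin.castSucc t, by simp [hρ', Fin.snoc_castSucc]⟩
        induction i using Fin.lastCases with
        | last =>
          apply Submodule.subset_span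
          exact ⟨Fin.last r, by simp [hρ', Fin.snoc_last]⟩
        | cast i =>
          have := hspan i
          have heq : ∀ t, (M.submatrix Fin.castSucc id) (ρ t) = M (Fin.castSucc (ρ t)) := by
            intro t; rfl
          have heq2 : (M.submatrix Fin.castSucc id) i = M (Fin.castSucc i) := rfl
          rw [heq2] at this
          simp only [heq] at this
          exact hsub this

open Matrix Finset in
lemma core {n m d : ℕ} (A : Matrix (Fin n) (Fin m) (Polynomial ℚ))
    (hA : ∀ i j, (A i j).natDegree ≤ d)
    (Y : Fin m → Polynomial ℚ) (hY : A.mulVec Y = 0) :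
    Y ∈ Submodule.span (Polynomial ℚ)
      {w : Fin m → Polynomial ℚ | A.mulVec w = 0 ∧ ∀ k, (w k).natDegree ≤ n * d} := by
  classical
  set K := FractionRing (Polynomial ℚ)
  set φ : Polynomial ℚ →+* K := algebraMap (Polynomial ℚ) K with hφ
  have hφinj : Function.Injective φ := IsFractionRing.injective _ _
  obtain ⟨r, ρ, σ, hrn, hσinj, hdetK, hspanK⟩ := sel n (A.map φ)
  set B : Matrix (Fin r) (Fin r) (Polynomial ℚ) := A.submatrix ρ σ with hB
  have hBmap : (A.map φ).submatrix ρ σ = B.map φ := rfl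
  have hdetB : B.det ≠ 0 := by
    intro h0
    apply hdetK
    rw [hBmap]
    have : (B.map ⇑φ).det = φ B.det := by
      rw [← RingHom.mapMatrix_apply, ← RingHom.map_det]
    rw [this, h0, map_zero]
  set δ : Polynomial ℚ := B.det with hδ
  -- solutions of the selected rows are solutions of the whole system
  have hker : ∀ W : Fin m → Polynomial ℚ,
      (A.submatrix ρ id).mulVec W = 0 → A.mulVec W = 0 := by
    intro W hW
    funext i
    show (A.mulVec W) i = 0
    apply hφinj
    rw [map_zero]
    rw [RingHom.map_mulVec φ A W i]
    obtain ⟨c, hc⟩ := (Submodule.mem_span_range_iff_exists_fun K).1 (hspanK i)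
    have hrow : (A.map φ) i = fun j => ∑ t, c t * (A.map φ) (ρ t) j := by
      funext j
      rw [← hc]; simp
    show (A.map φ) i ⬝ᵥ (φ ∘ W) = 0
    rw [hrow]
    have : ∀ t : Fin r, (A.map φ) (ρ t) ⬝ᵥ (φ ∘ W) = 0 := by
      intro t
      have h1 : ((A.submatrix ρ id).mulVec W) t = 0 := by rw [hW]; rfl
      have := congrArg φ h1
      rw [RingHom.map_mulVec φ (A.submatrix ρ id) W t, map_zero] at this
      exact this
    calc (fun j => ∑ t, c t * (A.map φ) (ρ t) j) ⬝ᵥ (φ ∘ W)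
        = ∑ j, ∑ t, c t * (A.map φ) (ρ t) j * (φ ∘ W) j := by
          simp [dotProduct, Finset.sum_mul]
          exact Finset.sum_congr rfl fun j _ => Finset.sum_mul _ _ _
      _ = ∑ t, ∑ j, c t * (A.map φ) (ρ t) j * (φ ∘ W) j := Finset.sum_comm
      _ = ∑ t, c t * ((A.map φ) (ρ t) ⬝ᵥ (φ ∘ W)) := by
          apply Finset.sum_congr rfl
          intro t _
          simp [dotProduct, Finset.mul_sum, mul_assoc]
      _ = 0 := by simp [this]
  -- the Cramer solutions
  set w : Fin m → Fin r → Polynomial ℚ :=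
    fun j => (Matrix.adjugate B).mulVec (fun t => A (ρ t) j) with hw
  set v : Fin m → Fin m → Polynomial ℚ :=
    fun j k => (if k = j then δ else 0) - ∑ t, if σ t = k then w j t else 0 with hv
  have hv1 : ∀ j, (A.submatrix ρ id).mulVec (v j) = 0 := by
    intro j
    funext t
    show (A.submatrix ρ id) t ⬝ᵥ v j = 0
    have expand : (A.submatrix ρ id) t ⬝ᵥ v j
        = (∑ k, A (ρ t) k * if k = j then δ else 0)
          - ∑ k, A (ρ t) k * ∑ s, if σ s = k then w j s else 0 := by
      simp only [dotProduct, Matrix.submatrix_apply, id_eq, hv, mul_sub,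
        Finset.sum_sub_distrib]
    rw [expand]
    have h1 : (∑ k, A (ρ t) k * if k = j then δ else 0) = A (ρ t) j * δ := by
      simp [Finset.sum_ite_eq]
    have h2 : (∑ k, A (ρ t) k * ∑ s, if σ s = k then w j s else 0)
        = ∑ s, A (ρ t) (σ s) * w j s := by
      simp only [Finset.mul_sum]
      rw [Finset.sum_comm]
      apply Finset.sum_congr rfl
      intro s _
      simp [mul_ite, Finset.sum_ite_eq]
    have h3 : (∑ s, A (ρ t) (σ s) * w j s) = δ * A (ρ t) j := by
      have e1 : (∑ s, A (ρ t) (σ s) * w j s) = (B.mulVec (w j)) t := rfl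
      rw [e1, hw]
      rw [Matrix.mulVec_mulVec, Matrix.mul_adjugate, Matrix.smul_mulVec,
        Matrix.one_mulVec]
      simp [hδ]
    rw [h1, h2, h3]
    ring
  -- degree bounds for the Cramer solutions
  have hδdeg : δ.natDegree ≤ n * d := by
    refine (detDeg B (fun _ => d) ?_).trans ?_
    · intro a b; exact hA _ _
    · simp only [Finset.sum_const, Finset.card_univ, Fintype.card_fin, smul_eq_mul]
      exact Nat.mul_le_mul_right d hrn
  have hwdeg : ∀ j s, (w j s).natDegree ≤ n * d := by
    intro j s
    rw [hw]
    show ((Matrix.adjugate B) s ⬝ᵥ fun t => A (ρ t) j).natDegree ≤ n * d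
    refine (natDegree_sum_le_of_forall_le _ _ ?_)
    intro t _
    refine (natDegree_mul_le).trans ?_
    have h1 := adjDeg B d (fun a b => hA _ _) s t
    have h2 := hA (ρ t) j
    have hr1 : 1 ≤ r := Nat.one_le_iff_ne_zero.2 (by rintro rfl; exact s.elim0)
    have : (r - 1) * d + d = r * d := by
      have := Nat.succ_pred_eq_of_pos hr1
      nlinarith [Nat.sub_add_cancel hr1]
    calc (Matrix.adjugate B s t).natDegree + (A (ρ t) j).natDegree
        ≤ (r - 1) * d + d := Nat.add_le_add h1 h2
      _ = r * d := this
      _ ≤ n * d := Nat.mul_le_mul_right d hrn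
  have hvdeg : ∀ j k, (v j k).natDegree ≤ n * d := by
    intro j k
    rw [hv]
    refine (natDegree_sub_le _ _).trans (max_le ?_ ?_)
    · split_ifs
      · exact hδdeg
      · simp
    · refine natDegree_sum_le_of_forall_le _ _ ?_
      intro t _
      split_ifs
      · exact hwdeg j t
      · simp
  have hvsol : ∀ j, A.mulVec (v j) = 0 := fun j => hker _ (hv1 j)
  -- the set of "free" columns
  set T : Finset (Fin m) := Finset.univ.filter (fun j => ∀ t, σ t ≠ j) with hT
  -- representation lemma: for any solution Z of the selected rows
  have hrep : ∀ Z : Fin m → Polynomial ℚ, (A.submatrix ρ id).mulVec Z = 0 →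
      δ • Z = ∑ j ∈ T, Z j • v j := by
    intro Z hZ
    set Z' : Fin m → Polynomial ℚ := δ • Z - ∑ j ∈ T, Z j • v j with hZ'
    have hml : ∀ W : Fin m → Polynomial ℚ,
        (A.submatrix ρ id).mulVec W = (A.submatrix ρ id).mulVecLin W := fun _ => rfl
    have hZ'sol : (A.submatrix ρ id).mulVec Z' = 0 := by
      rw [hZ']
      rw [hml] at hZ ⊢
      have hv1' : ∀ j, (A.submatrix ρ id).mulVecLin (v j) = 0 := by
        intro j; rw [← hml]; exact hv1 j
      simp [map_sub, _root_.map_smul, map_sum, hZ, hv1']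
    have hZ'off : ∀ k, (∀ t, σ t ≠ k) → Z' k = 0 := by
      intro k hk
      have hkT : k ∈ T := by simp [hT, hk]
      rw [hZ']
      simp only [Pi.sub_apply, Pi.smul_apply, Finset.sum_apply, smul_eq_mul]
      have : ∀ j ∈ T, Z j * v j k = if k = j then Z j * δ else 0 := by
        intro j hj
        rw [hv]
        simp only
        have : (∑ t, if σ t = k then w j t else 0) = 0 := by
          apply Finset.sum_eq_zero
          intro t _
          rw [if_neg (hk t)]
        rw [this, sub_zero, mul_ite, mul_zero]
      rw [Finset.sum_congr rfl this, Finset.sum_ite_eq T k (fun j => Z j * δ), if_pos hkT]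
      ring
    have hZ'σ : ∀ t, Z' (σ t) = 0 := by
      have hBv : B.mulVec (fun t => Z' (σ t)) = 0 := by
        funext t
        have h0 : ((A.submatrix ρ id).mulVec Z') t = 0 := by rw [hZ'sol]; rfl
        have hsum : ((A.submatrix ρ id).mulVec Z') t = ∑ k, A (ρ t) k * Z' k := rfl
        have hsub : (Finset.univ.image σ) ⊆ Finset.univ := Finset.subset_univ _
        have hout : ∀ k ∈ Finset.univ, k ∉ Finset.univ.image σ → A (ρ t) k * Z' k = 0 := by
          intro k _ hk
          have : ∀ t', σ t' ≠ k := by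
            intro t' ht'
            exact hk (Finset.mem_image.2 ⟨t', Finset.mem_univ _, ht'⟩)
          rw [hZ'off k this, mul_zero]
        have himg : ∑ k ∈ Finset.univ.image σ, A (ρ t) k * Z' k = ∑ k, A (ρ t) k * Z' k :=
          Finset.sum_subset hsub hout
        have hre : ∑ k ∈ Finset.univ.image σ, A (ρ t) k * Z' k
            = ∑ s, A (ρ t) (σ s) * Z' (σ s) := by
          rw [Finset.sum_image (fun a _ b _ hab => hσinj hab)]
        show ∑ s, B t s * Z' (σ s) = 0
        calc ∑ s, B t s * Z' (σ s) = ∑ s, A (ρ t) (σ s) * Z' (σ s) := rfl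
          _ = ∑ k ∈ Finset.univ.image σ, A (ρ t) k * Z' k := hre.symm
          _ = ∑ k, A (ρ t) k * Z' k := himg
          _ = 0 := by rw [← hsum, h0]
      have hδz : δ • (fun t => Z' (σ t)) = 0 := by
        have := congrArg (Matrix.adjugate B).mulVec hBv
        rw [Matrix.mulVec_mulVec, Matrix.adjugate_mul, Matrix.smul_mulVec,
          Matrix.one_mulVec] at this
        simpa using this
      intro t
      have : δ * Z' (σ t) = 0 := congrFun hδz t
      rcases mul_eq_zero.1 this with h | h
      · exact absurd h hdetB
      · exact h
    have : Z' = 0 := by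
      funext k
      by_cases hk : ∃ t, σ t = k
      · obtain ⟨t, rfl⟩ := hk; exact hZ'σ t
      · push_neg at hk; exact hZ'off k hk
    have := sub_eq_zero.1 (hZ' ▸ this)
    exact this
  -- now divide Y by the determinant
  have hAsel : (A.submatrix ρ id).mulVec Y = 0 := by
    funext t
    exact congrFun hY (ρ t)
  set u : ℚ := δ.leadingCoeff with hu'
  have hu : u ≠ 0 := leadingCoeff_ne_zero.2 hdetB
  set δm : Polynomial ℚ := δ * C u⁻¹ with hδm
  have hmon : δm.Monic := monic_mul_leadingCoeff_inv hdetB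
  set q : Fin m → Polynomial ℚ := fun j => Y j /ₘ δm with hq
  set rr : Fin m → Polynomial ℚ := fun j => Y j %ₘ δm with hrr
  have hqr : ∀ j, rr j = Y j - δm * q j := by
    intro j
    have := modByMonic_add_div (Y j) δm
    rw [hrr, hq]
    simp only
    linear_combination this
  set Z : Fin m → Polynomial ℚ := Y - ∑ j ∈ T, (C u⁻¹ * q j) • v j with hZdef
  have hZδ : δ • Z = ∑ j ∈ T, rr j • v j := by
    rw [hZdef, smul_sub, hrep Y hAsel, Finset.smul_sum, ← Finset.sum_sub_distrib]
    apply Finset.sum_congr rfl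
    intro j hj
    rw [smul_smul, ← sub_smul]
    congr 1
    rw [hqr j, hδm]
    ring
  have hZsol : A.mulVec Z = 0 := by
    have hml : ∀ W : Fin m → Polynomial ℚ, A.mulVec W = A.mulVecLin W := fun _ => rfl
    rw [hZdef, hml]
    rw [hml] at hY
    have hvsol' : ∀ j, A.mulVecLin (v j) = 0 := by
      intro j; rw [← hml]; exact hvsol j
    simp [map_sub, _root_.map_smul, map_sum, hY, hvsol']
  have hZdeg : ∀ k, (Z k).natDegree ≤ n * d := by
    intro k
    by_cases hZk : Z k = 0
    · simp [hZk]
    · have hδZ : δ * Z k = ∑ j ∈ T, rr j * v j k := by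
        have := congrFun hZδ k
        simpa using this
      have hRHS : (∑ j ∈ T, rr j * v j k).natDegree ≤ (δ.natDegree - 1) + n * d := by
        apply natDegree_sum_le_of_forall_le
        intro j hj
        by_cases hrj : rr j = 0
        · simp [hrj]
        · refine natDegree_mul_le.trans ?_
          have h1 : (rr j).natDegree < δ.natDegree := by
            have hlt := degree_modByMonic_lt (Y j) hmon
            have hdm : δm.degree = δ.degree := by
              rw [hδm]; exact degree_mul_leadingCoeff_inv δ hdetB
            exact natDegree_lt_natDegree hrj (hdm ▸ hlt)
          have h2 := hvdeg j k
          omega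
      have hL : (δ * Z k).natDegree = δ.natDegree + (Z k).natDegree := natDegree_mul hdetB hZk
      have : δ.natDegree + (Z k).natDegree ≤ δ.natDegree - 1 + n * d := by
        rw [← hL, hδZ]; exact hRHS
      omega
  have hYeq : Y = Z + ∑ j ∈ T, (C u⁻¹ * q j) • v j := by
    rw [hZdef]
    abel
  rw [hYeq]
  refine Submodule.add_mem _ (Submodule.subset_span ⟨hZsol, hZdeg⟩)
    (Submodule.sum_mem _ fun j hj => Submodule.smul_mem _ _
      (Submodule.subset_span ⟨hvsol j, fun k => hvdeg j k⟩))
open Matrix Finset in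
lemma intify (p : Polynomial ℚ) :
    ∃ (z : ℤ) (P : Polynomial ℤ), z ≠ 0 ∧ P.map (Int.castRingHom ℚ) = C (z : ℚ) * p := by
  induction p using Polynomial.induction_on' with
  | monomial i a =>
    refine ⟨(a.den : ℤ), monomial i a.num, by exact_mod_cast a.den_nz, ?_⟩
    rw [Polynomial.map_monomial]
    have key : ((a.den : ℤ) : ℚ) * a = (a.num : ℚ) := by
      push_cast
      rw [mul_comm, ← eq_div_iff (by exact_mod_cast a.den_nz)]
      exact (Rat.num_div_den a).symm
    rw [C_mul_monomial, key]
    simp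
  | add p q hp hq =>
    obtain ⟨z1, P1, hz1, hP1⟩ := hp
    obtain ⟨z2, P2, hz2, hP2⟩ := hq
    refine ⟨z1 * z2, C z2 * P1 + C z1 * P2, mul_ne_zero hz1 hz2, ?_⟩
    rw [Polynomial.map_add, Polynomial.map_mul, Polynomial.map_mul, map_C, map_C, hP1, hP2]
    simp only [eq_intCast]
    push_cast [C_mul]
    ring

lemma intifyVec {m : ℕ} (g : Fin m → Polynomial ℚ) :
    ∃ (z : ℤ) (c : Fin m → Polynomial ℤ), z ≠ 0 ∧
      ∀ k, (c k).map (Int.castRingHom ℚ) = C (z : ℚ) * g k := by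
  choose z P hz hP using fun k => intify (g k)
  refine ⟨∏ l, z l, fun k => C (∏ l ∈ Finset.univ.erase k, z l) * P k,
    Finset.prod_ne_zero_iff.2 fun l _ => hz l, ?_⟩
  intro k
  rw [Polynomial.map_mul, map_C, hP k]
  rw [← mul_assoc, ← C_mul]
  congr 2
  simp only [eq_intCast]
  rw [← Finset.prod_erase_mul Finset.univ z (Finset.mem_univ k)]
  push_cast
  ring

open Matrix Finset in
/-- Let F ∈ ℤ[x]^{n×m} with d = deg(F) the maximum degree of its entries.
Then the ℚ[x]-module Sol_{ℚ[x]}(F) = {Y ∈ ℚ[x]^m : FY = 0} is generated by finitely many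
vectors lying in ℤ[x]^m whose entries have degree at most n·d. -/
theorem stmt10 {n m : ℕ} (F : Matrix (Fin n) (Fin m) (Polynomial ℤ))
    (d : ℕ) (hd : ∀ i j, (F i j).natDegree ≤ d) :
    ∃ S : Finset (Fin m → Polynomial ℤ),
      (∀ v ∈ S, ∀ j, (v j).natDegree ≤ n * d) ∧
      ∀ Y : Fin m → Polynomial ℚ,
        Y ∈ Submodule.span (Polynomial ℚ)
          ((fun v : Fin m → Polynomial ℤ => fun j => (v j).map (Int.castRingHom ℚ)) ''
            (↑S : Set (Fin m → Polynomial ℤ))) ↔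
        (F.map fun q => q.map (Int.castRingHom ℚ)).mulVec Y = 0 := by
  classical
  set A : Matrix (Fin n) (Fin m) (Polynomial ℚ) :=
    F.map fun q => q.map (Int.castRingHom ℚ) with hAdef
  have hA : ∀ i j, (A i j).natDegree ≤ d := fun i j => natDegree_map_le.trans (hd i j)
  set N : ℕ := n * d + 1 with hN
  set Φ : (Fin m → Fin N → ℚ) →ₗ[ℚ] (Fin m → Polynomial ℚ) :=
    LinearMap.pi fun k =>
      (∑ i : Fin N, (monomial (i : ℕ)).comp (LinearMap.proj i)).comp (LinearMap.proj k) with hΦdef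
  have hΦ : ∀ a k, Φ a k = ∑ i : Fin N, monomial (i : ℕ) (a k i) := by
    intro a k
    simp [hΦdef, LinearMap.pi_apply, LinearMap.sum_apply]
  set Kq : Submodule ℚ (Fin m → Polynomial ℚ) :=
    (LinearMap.ker (Matrix.mulVecLin A)).restrictScalars ℚ with hKq
  set U₀ : Submodule ℚ (Fin m → Fin N → ℚ) := Kq.comap Φ with hU₀
  obtain ⟨s₀, hs₀⟩ := IsNoetherian.noetherian U₀
  choose zf cf hzf hcf using fun a : Fin m → Fin N → ℚ => intifyVec (Φ a)
  refine ⟨s₀.image cf, ?_, ?_⟩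
  · rintro v hv k
    obtain ⟨a, _, rfl⟩ := Finset.mem_image.1 hv
    have hinj : Function.Injective (Int.castRingHom ℚ) := fun x y h => by
      have : (x : ℚ) = (y : ℚ) := h
      exact_mod_cast this
    have e1 : (cf a k).natDegree = ((cf a k).map (Int.castRingHom ℚ)).natDegree :=
      (natDegree_map_eq_of_injective hinj _).symm
    rw [e1, hcf a k, natDegree_C_mul (by exact_mod_cast hzf a : ((zf a : ℚ)) ≠ 0)]
    rw [hΦ]
    refine natDegree_sum_le_of_forall_le _ _ fun i _ => ?_
    exact (natDegree_monomial_le _).trans (Nat.lt_succ_iff.mp i.isLt)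
  · intro Y
    have himg : ∀ b ∈ s₀, (fun k => (cf b k).map (Int.castRingHom ℚ)) = C ((zf b : ℚ)) • Φ b := by
      intro b _
      funext k
      rw [hcf b k]
      simp [smul_eq_mul]
    constructor
    · intro hY
      have hsub : ((fun v : Fin m → Polynomial ℤ => fun j => (v j).map (Int.castRingHom ℚ)) ''
          (↑(s₀.image cf) : Set (Fin m → Polynomial ℤ)))
          ⊆ (LinearMap.ker (Matrix.mulVecLin A) : Set (Fin m → Polynomial ℚ)) := by
        rintro _ ⟨v, hv, rfl⟩
        obtain ⟨b, hb, rfl⟩ := Finset.mem_image.1 (Finset.mem_coe.1 hv)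
        have hbU : b ∈ U₀ := by
          rw [← hs₀]
          exact Submodule.subset_span (Finset.mem_coe.2 hb)
        have hbker : A.mulVecLin (Φ b) = 0 := hbU
        rw [SetLike.mem_coe, LinearMap.mem_ker]
        have heq : ((fun v : Fin m → Polynomial ℤ => fun j => (v j).map (Int.castRingHom ℚ))
            (cf b)) = C ((zf b : ℚ)) • Φ b := himg b hb
        rw [heq, _root_.map_smul, hbker, smul_zero]
      have := Submodule.span_le.2 hsub hY
      exact this
    · intro hY
      have hspan := core A hA Y hY
      refine Submodule.span_le.2 ?_ hspan
      rintro w ⟨hw1, hw2⟩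
      set a : Fin m → Fin N → ℚ := fun k i => (w k).coeff i with ha
      have hΦa : Φ a = w := by
        funext k
        rw [hΦ]
        rw [Fin.sum_univ_eq_sum_range (fun i => monomial i ((w k).coeff i)) N]
        exact (as_sum_range' (w k) N (Nat.lt_succ_of_le (hw2 k))).symm
      have haU : a ∈ U₀ := by
        show Φ a ∈ Kq
        rw [hΦa]
        exact hw1
      have haspan : a ∈ Submodule.span ℚ (↑s₀ : Set (Fin m → Fin N → ℚ)) := by
        rw [hs₀]; exact haU
      obtain ⟨f, -, hf⟩ := Submodule.mem_span_finset.1 haspan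
      have hwrep : w = ∑ b ∈ s₀, f b • Φ b := by
        rw [← hΦa, ← hf, map_sum]
        simp only [_root_.map_smul]
      rw [hwrep]
      refine Submodule.sum_mem _ fun b hb => ?_
      have hqsmul : f b • Φ b = C (f b) • Φ b := by
        funext k
        simp [smul_eq_C_mul]
      rw [hqsmul]
      refine Submodule.smul_mem _ _ ?_
      have hΦb : Φ b = C ((zf b : ℚ))⁻¹ • fun k => (cf b k).map (Int.castRingHom ℚ) := by
        rw [himg b hb, smul_smul, ← C_mul, inv_mul_cancel₀ (by exact_mod_cast hzf b), C_1, one_smul]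
      rw [hΦb]
      refine Submodule.smul_mem _ _ (Submodule.subset_span ?_)
      exact ⟨cf b, Finset.mem_coe.2 (Finset.mem_image_of_mem cf hb), rfl⟩
end

section
/- Let M be a ℤ[x]-submodule of ℤ[x]^m. Suppose that for each prime p a finite subset S_p ⊆ M is given such that the image of S_p in ℤ_(p)[x]^m generates, as a ℤ_(p)[x]-module, the ℤ_(p)[x]-submodule of ℤ_(p)[x]^m generated by the image of M. Then the union ⋃_p S_p, taken over all primes p, generates M as a ℤ[x]-module. -/
open Polynomial

instance span_int_prime_isPrime (p : ℕ) [hp : Fact p.Prime] :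
    (Ideal.span {(p : ℤ)}).IsPrime :=
  (Ideal.span_singleton_prime (by exact_mod_cast hp.out.ne_zero)).mpr
    (Nat.prime_iff_prime_int.mp hp.out)

/-- ℤ_(p): the localization of ℤ at the prime ideal (p). -/
abbrev ZLoc (p : ℕ) [Fact p.Prime] : Type :=
  Localization.AtPrime (Ideal.span {(p : ℤ)})

/-- Key lemma: if the image of `v` lies in the span of the image of a finite set `S`
contained in `N`, then some integer `d` not divisible by `p` satisfies `d • v ∈ N`. -/
lemma key_lemma {m : ℕ} (p : ℕ) [Fact p.Prime]
    (N : Submodule (Polynomial ℤ) (Fin m → Polynomial ℤ))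
    (v : Fin m → Polynomial ℤ) (T : Set (Fin m → Polynomial ℤ))
    (hTN : T ⊆ (N : Set (Fin m → Polynomial ℤ)))
    (hv : (fun j => (v j).map (algebraMap ℤ (ZLoc p))) ∈
      Submodule.span (Polynomial (ZLoc p))
        ((fun w : Fin m → Polynomial ℤ => fun j => (w j).map (algebraMap ℤ (ZLoc p))) '' T)) :
    ∃ d : ℤ, ¬ (p : ℤ) ∣ d ∧ (C d) • v ∈ N := by
  classical
  set P : Ideal ℤ := Ideal.span {(p : ℤ)} with hP
  set φ : ℤ →+* ZLoc p := algebraMap ℤ (ZLoc p) with hφ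
  set F : (Fin m → Polynomial ℤ) → (Fin m → Polynomial (ZLoc p)) :=
    fun w => fun j => (w j).map φ with hF
  obtain ⟨n, c, g, hsum⟩ := Submodule.mem_span_set'.mp hv
  choose w hwT hwF using fun i => (Set.mem_image _ _ _).mp (g i).2
  -- clear denominators
  choose b hb using fun i =>
    IsLocalization.integerNormalization_map_to_map P.primeCompl (c i)
  set q : Fin n → Polynomial ℤ :=
    fun i => IsLocalization.integerNormalization P.primeCompl (c i) with hq
  set D : P.primeCompl := ∏ i, b i with hD
  set d : ℤ := (D : ℤ) with hd
  have hdP : d ∉ P := D.2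
  refine ⟨d, fun hdvd => hdP (Ideal.mem_span_singleton.mpr hdvd), ?_⟩
  set e : Fin n → ℤ := fun i => ∏ j ∈ Finset.univ.erase i, (b j : ℤ) with he
  have hed : ∀ i, e i * (b i : ℤ) = d := by
    intro i
    simp only [he, hd, hD]
    push_cast
    exact Finset.prod_erase_mul _ _ (Finset.mem_univ i)
  set u : Fin m → Polynomial ℤ := ∑ i, (C (e i) * q i) • w i with hu
  have huN : u ∈ N := Submodule.sum_mem _ fun i _ =>
    Submodule.smul_mem _ _ (hTN (hwT i))
  have hinj : Function.Injective φ :=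
    IsLocalization.injective (ZLoc p) P.primeCompl_le_nonZeroDivisors
  have hFeq : C d • v = u := by
    funext j
    apply Polynomial.map_injective φ hinj
    have hsumj := congrFun hsum j
    simp only [Finset.sum_apply, Pi.smul_apply, smul_eq_mul] at hsumj
    have hgw : ∀ i, ((g i : Fin m → Polynomial (ZLoc p))) j = (w i j).map φ := by
      intro i
      rw [← hwF i]
    simp only [hu, Pi.smul_apply, Finset.sum_apply, smul_eq_mul, Polynomial.map_mul,
      Polynomial.map_C, Polynomial.map_sum]
    have hqi : ∀ i, (q i).map φ = C (φ (b i : ℤ)) * c i := by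
      intro i
      rw [hq, hb i]
      ext k
      simp [coeff_smul, coeff_C_mul, zsmul_eq_mul, hφ, algebraMap_int_eq, eq_intCast]
    calc C (φ d) * (v j).map φ
        = ∑ i, C (φ d) * (c i * ((g i : Fin m → Polynomial (ZLoc p)) j)) := by
          rw [← Finset.mul_sum, hsumj]
      _ = ∑ i, C (φ (e i)) * ((q i).map φ * (w i j).map φ) := by
          refine Finset.sum_congr rfl fun i _ => ?_
          rw [hqi i, hgw i, ← hed i]
          push_cast [map_mul]
          ring
      _ = ∑ i, C (φ (e i)) * (q i).map φ * (w i j).map φ := by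
          simp [mul_assoc]
  rw [hFeq]
  exact huN

/-- Aschenbrenner: Let M be a ℤ[x]-submodule of ℤ[x]^m. Suppose for each
prime p a finite subset S_p ⊆ M is given whose image in ℤ_(p)[x]^m generates the
ℤ_(p)[x]-submodule generated by the image of M. Then ⋃_p S_p generates M over ℤ[x]. -/
theorem stmt13 {m : ℕ} (M : Submodule (Polynomial ℤ) (Fin m → Polynomial ℤ))
    (S : ℕ → Finset (Fin m → Polynomial ℤ))
    (hS : ∀ (p : ℕ) [Fact p.Prime],
      (↑(S p) : Set (Fin m → Polynomial ℤ)) ⊆ (M : Set (Fin m → Polynomial ℤ)) ∧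
      Submodule.span (Polynomial (ZLoc p))
        ((fun v : Fin m → Polynomial ℤ => fun j => (v j).map (algebraMap ℤ (ZLoc p))) ''
          (↑(S p) : Set (Fin m → Polynomial ℤ))) =
      Submodule.span (Polynomial (ZLoc p))
        ((fun v : Fin m → Polynomial ℤ => fun j => (v j).map (algebraMap ℤ (ZLoc p))) ''
          (M : Set (Fin m → Polynomial ℤ)))) :
    Submodule.span (Polynomial ℤ)
      (⋃ (p : ℕ) (_ : p.Prime), (↑(S p) : Set (Fin m → Polynomial ℤ))) = M := by
  classical
  set N := Submodule.span (Polynomial ℤ)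
      (⋃ (p : ℕ) (_ : p.Prime), (↑(S p) : Set (Fin m → Polynomial ℤ))) with hN
  have hNM : N ≤ M := by
    rw [hN, Submodule.span_le]
    intro x hx
    simp only [Set.mem_iUnion] at hx
    obtain ⟨p, hp, hx⟩ := hx
    haveI := Fact.mk hp
    exact (hS p).1 hx
  refine le_antisymm hNM ?_
  intro v hv
  -- the ideal of integers d with C d • v ∈ N
  set I : Ideal ℤ :=
    { carrier := {a : ℤ | C a • v ∈ N}
      add_mem' := fun {a} {b} ha hb => by
        simp only [Set.mem_setOf_eq, map_add, add_smul] at *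
        exact Submodule.add_mem _ ha hb
      zero_mem' := by simp only [Set.mem_setOf_eq, map_zero, zero_smul]; exact Submodule.zero_mem _
      smul_mem' := fun r a ha => by
        simp only [Set.mem_setOf_eq, smul_eq_mul, map_mul, mul_smul] at *
        exact Submodule.smul_mem _ _ ha } with hI
  have hImem : ∀ a : ℤ, a ∈ I ↔ C a • v ∈ N := fun a => Iff.rfl
  -- for every prime p there is d ∈ I not divisible by p
  have hkey : ∀ p : ℕ, p.Prime → ∃ d : ℤ, ¬ (p : ℤ) ∣ d ∧ d ∈ I := by
    intro p hp
    haveI := Fact.mk hp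
    have hvspan : (fun j => (v j).map (algebraMap ℤ (ZLoc p))) ∈
        Submodule.span (Polynomial (ZLoc p))
          ((fun w : Fin m → Polynomial ℤ => fun j => (w j).map (algebraMap ℤ (ZLoc p))) ''
            (↑(S p) : Set (Fin m → Polynomial ℤ))) := by
      rw [(hS p).2]
      exact Submodule.subset_span ⟨v, hv, rfl⟩
    have hsub : (↑(S p) : Set (Fin m → Polynomial ℤ)) ⊆ (N : Set _) := by
      intro x hx
      exact Submodule.subset_span (Set.mem_iUnion.mpr ⟨p, Set.mem_iUnion.mpr ⟨hp, hx⟩⟩)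
    obtain ⟨d, hd1, hd2⟩ := key_lemma p N v (↑(S p)) hsub hvspan
    exact ⟨d, hd1, hd2⟩
  -- conclude I = ⊤
  have hItop : I = ⊤ := by
    by_contra hne
    obtain ⟨nI, hnI⟩ : ∃ nI : ℤ, I = Ideal.span {nI} :=
      ⟨Submodule.IsPrincipal.generator I, (Ideal.span_singleton_generator I).symm⟩
    by_cases hn0 : nI = 0
    · obtain ⟨d, hd1, hd2⟩ := hkey 2 Nat.prime_two
      rw [hnI, hn0, Ideal.span_singleton_eq_bot.mpr rfl, Ideal.mem_bot] at hd2
      exact hd1 (hd2 ▸ dvd_zero _)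
    · have hnu : ¬ IsUnit nI := by
        intro hu
        exact hne (hnI ▸ Ideal.span_singleton_eq_top.mpr hu)
      have h1 : nI.natAbs ≠ 1 := fun h => hnu (Int.isUnit_iff_natAbs_eq.mpr h)
      obtain ⟨p, hp, hpd⟩ := Nat.exists_prime_and_dvd h1
      obtain ⟨d, hd1, hd2⟩ := hkey p hp
      rw [hnI, Ideal.mem_span_singleton] at hd2
      exact hd1 (((Int.natCast_dvd_natCast.mpr hpd).trans (Int.natAbs_dvd.mpr dvd_rfl)).trans hd2)
  have h1I : (1 : ℤ) ∈ I := hItop ▸ Submodule.mem_top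
  have : C (1 : ℤ) • v ∈ N := h1I
  simpa using this
end
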